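/- arXiv:math/0101128 — 3 statements merged into one kernel-verified Lean document; each statement's English description precedes it below -/
import Mathlib

section
/- For the doubling map, the points x_n with binary expansion 0 1^{2n+1} 0^∞ (a 0, then 2n+1 ones, then all zeros) are not in the even shift, but every point of their forward orbit other than x_n itself has coding in the even shift; moreover the points y_n = 0 1^{2n} 0^∞ lie in the even shift and satisfy x_{n-1} < y_n < x_n as real numbers. -/
/-- The one-sided even shift: every maximal block of `1`s lying between two `0`s
has even length. -/
def EvenShiftPlus : Set (ℕ → Fin 2) :=
  {s | ∀ i j : ℕ, i < j → s i = 0 → s j = 0 →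
    (∀ k, i < k → k < j → s k = 1) → Even (j - i - 1)}

/-- The real number with binary expansion `s`. -/
noncomputable def binVal (s : ℕ → Fin 2) : ℝ := ∑' i : ℕ, (s i : ℝ) / 2 ^ (i + 1)

/-- The sequence `0 1^(2n+1) 0^∞`. -/
def seqX (n : ℕ) : ℕ → Fin 2 := fun i => if 1 ≤ i ∧ i ≤ 2 * n + 1 then 1 else 0

/-- The sequence `0 1^(2n) 0^∞`. -/
def seqY (n : ℕ) : ℕ → Fin 2 := fun i => if 1 ≤ i ∧ i ≤ 2 * n then 1 else 0

lemma sumGeo (L : ℕ) :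
    ∑ i ∈ Finset.range (L + 1), (if 1 ≤ i then (1 : ℝ) else 0) / 2 ^ (i + 1)
      = 1 / 2 - (1 / 2 : ℝ) ^ (L + 1) := by
  induction L with
  | zero => norm_num
  | succ L ih =>
    rw [Finset.sum_range_succ, ih, if_pos (by omega : 1 ≤ L + 1)]
    rw [div_pow, div_pow]
    field_simp
    ring

lemma binValBlock (L : ℕ) :
    binVal (fun i => if 1 ≤ i ∧ i ≤ L then 1 else 0)
      = 1 / 2 - (1 / 2 : ℝ) ^ (L + 1) := by
  unfold binVal
  rw [tsum_eq_sum (s := Finset.range (L + 1)) (by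
    intro i hi
    simp only [Finset.mem_range, not_lt] at hi
    have : ¬(1 ≤ i ∧ i ≤ L) := by omega
    simp [this])]
  rw [← sumGeo L]
  apply Finset.sum_congr rfl
  intro i hi
  simp only [Finset.mem_range] at hi
  by_cases h : 1 ≤ i
  · have : 1 ≤ i ∧ i ≤ L := ⟨h, by omega⟩
    simp [this, h]
  · have : ¬(1 ≤ i ∧ i ≤ L) := by tauto
    simp [this, h]

/-- the points `x_n = 0 1^(2n+1) 0^∞` are not in the even shift, but every
point of their forward orbit other than `x_n` itself (i.e. every proper shift of the
sequence) lies in the even shift; the points `y_n = 0 1^(2n) 0^∞` lie in the even shift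
and satisfy `x_(n-1) < y_n < x_n` as real numbers. -/
theorem xn_yn_even_shift (n : ℕ) (hn : 1 ≤ n) :
    seqX n ∉ EvenShiftPlus ∧
    (∀ k : ℕ, 1 ≤ k → (fun i => seqX n (i + k)) ∈ EvenShiftPlus) ∧
    seqY n ∈ EvenShiftPlus ∧
    binVal (seqX (n - 1)) < binVal (seqY n) ∧
    binVal (seqY n) < binVal (seqX n) := by
  have hX : ∀ m i, seqX m i = 0 ↔ ¬(1 ≤ i ∧ i ≤ 2 * m + 1) := by
    intro m i
    simp only [seqX]
    split_ifs with h <;> simp [h]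
  have hX1 : ∀ m i, seqX m i = 1 ↔ (1 ≤ i ∧ i ≤ 2 * m + 1) := by
    intro m i
    simp only [seqX]
    split_ifs with h <;> simp [h]
  have hY : ∀ m i, seqY m i = 0 ↔ ¬(1 ≤ i ∧ i ≤ 2 * m) := by
    intro m i
    simp only [seqY]
    split_ifs with h <;> simp [h]
  refine ⟨?_, ?_, ?_, ?_, ?_⟩
  · -- not in even shift
    intro hmem
    have := hmem 0 (2 * n + 2) (by omega) ((hX n 0).2 (by omega))
      ((hX n (2 * n + 2)).2 (by omega))
      (fun k hk1 hk2 => (hX1 n k).2 ⟨by omega, by omega⟩)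
    simp only [Nat.sub_zero] at this
    obtain ⟨m, hm⟩ := this
    omega
  · -- proper shifts
    intro k hk i j hij hi hj hall
    rcases Nat.lt_or_ge (i + 1) j with hlt | hge
    · exfalso
      have h1 := hall (i + 1) (by omega) hlt
      rw [hX1] at h1
      rw [hX] at hi
      omega
    · have : j = i + 1 := by omega
      simp [this]
  · -- seqY n in even shift
    intro i j hij hi hj hall
    rw [hY] at hi hj
    rcases Nat.lt_or_ge (i + 1) j with hlt | hge
    · -- block nonempty
      by_cases hi0 : i = 0
      · subst hi0
        -- all k with 0 < k < j are 1, so j ≤ 2n+1; j = 0 impossible, j > 2n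
        have hj1 : 2 * n < j := by omega
        have hle : j ≤ 2 * n + 1 := by
          by_contra hgt
          push_neg at hgt
          have h1 := hall (2 * n + 1) (by omega) (by omega)
          simp only [seqY] at h1
          rw [if_neg (by omega)] at h1
          exact absurd h1 (by decide)
        have : j = 2 * n + 1 := by omega
        subst this
        simp only [Nat.sub_zero]
        exact ⟨n, by omega⟩
      · exfalso
        have h1 := hall (i + 1) (by omega) hlt
        simp only [seqY] at h1
        rw [if_neg (by omega)] at h1
        exact absurd h1 (by decide)
    · have : j = i + 1 := by omega
      simp [this]
  · -- x_{n-1} < y_n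
    have e1 : seqX (n - 1) = fun i => if 1 ≤ i ∧ i ≤ 2 * (n - 1) + 1 then 1 else 0 := rfl
    have e2 : seqY n = fun i => if 1 ≤ i ∧ i ≤ 2 * n then 1 else 0 := rfl
    rw [e1, e2, binValBlock, binValBlock]
    have h1 : 2 * (n - 1) + 1 + 1 < 2 * n + 1 := by omega
    have := pow_lt_pow_right_of_lt_one₀ (by norm_num : (0:ℝ) < 1/2)
      (by norm_num : (1/2:ℝ) < 1) h1
    linarith
  · have e1 : seqY n = fun i => if 1 ≤ i ∧ i ≤ 2 * n then 1 else 0 := rfl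
    have e2 : seqX n = fun i => if 1 ≤ i ∧ i ≤ 2 * n + 1 then 1 else 0 := rfl
    rw [e1, e2, binValBlock, binValBlock]
    have h1 : 2 * n + 1 < 2 * n + 1 + 1 := by omega
    have := pow_lt_pow_right_of_lt_one₀ (by norm_num : (0:ℝ) < 1/2)
      (by norm_num : (1/2:ℝ) < 1) h1
    linarith
end

section
/- Let f be an Axiom A diffeomorphism with proper generating Markov partition P and open hole H with compact boundary, and set H^(n) := int(⋃{P ∈ P^(n) : P ∩ cl(H) ≠ ∅}) where P^(n) = ⋁_{i=−n}^{n} fⁱP. Then the H^(n) form a decreasing sequence of open sets with ⋂_n H^(n) = cl(H), and the corresponding exclusion systems satisfy Σ^(1) ⊂ Σ^(2) ⊂ ⋯ with closure of the union contained in Σ_H. -/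
/-- An abstract model of an Axiom A diffeomorphism of a compact manifold equipped with
a proper generating Markov partition `P` (indexed by `Fin N`). -/
structure MarkovSystem where
  M : Type
  [ms : MetricSpace M]
  [cs : CompactSpace M]
  f : Equiv.Perm M
  f_cont : Continuous f
  f_symm_cont : Continuous f.symm
  N : ℕ
  P : Fin N → Set M
  proper : ∀ i, P i = closure (interior (P i))
  cover : (⋃ i, P i) = Set.univ
  generating : ∀ ε > 0, ∃ n : ℕ, ∀ c : ℤ → Fin N,
    Metric.diam {x : M | ∀ i ∈ Finset.Icc (-(n : ℤ)) (n : ℤ), (f ^ i) x ∈ P (c i)} ≤ ε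

attribute [instance] MarkovSystem.ms MarkovSystem.cs

namespace MarkovSystem

variable (S : MarkovSystem)

/-- An element of the refined Markov partition `P⁽ⁿ⁾ = ⋁_{i=-n}^n fⁱP`, given by the
itinerary `c` on the time window `[-n, n]`. -/
def cell (n : ℕ) (c : ℤ → Fin S.N) : Set S.M :=
  {x : S.M | ∀ i ∈ Finset.Icc (-(n : ℤ)) (n : ℤ), (S.f ^ i) x ∈ S.P (c i)}

/-- The points whose full orbit (forward and backward) avoids the hole `H`. -/
def survivors (H : Set S.M) : Set S.M := {p | ∀ k : ℤ, (S.f ^ k) p ∉ H}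

/-- The nonwandering points of the system restricted to the survivor set. -/
def exclOmega (H : Set S.M) : Set S.M :=
  {p | p ∈ S.survivors H ∧ ∀ U : Set S.M, IsOpen U → p ∈ U →
    ∃ n : ℕ, 0 < n ∧ ∃ q ∈ U ∩ S.survivors H, (S.f ^ (n : ℤ)) q ∈ U}

/-- The exclusion subshift `Σ_H`: the symbolic codings (with respect to the Markov
partition) of the nonwandering points whose full orbit avoids `H`. -/
def exclShift (H : Set S.M) : Set (ℤ → Fin S.N) :=
  {c | ∃ p ∈ S.exclOmega H, ∀ i : ℤ, (S.f ^ i) p ∈ S.P (c i)}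

end MarkovSystem

/-- A subshift of finite type: a set of bi-infinite sequences defined by a finite set
of allowed words of some fixed length `m`. -/
def IsSFT {A : Type*} (Sig : Set (ℤ → A)) : Prop :=
  ∃ (m : ℕ) (W : Set (Fin m → A)), W.Finite ∧
    Sig = {s | ∀ k : ℤ, (fun j : Fin m => s (k + (j : ℤ))) ∈ W}

/-- The Markov approximation of the hole from outside: the interior of the union of all
elements of `P⁽ⁿ⁾` meeting the closure of `H`. -/
def MarkovSystem.holeApprox (S : MarkovSystem) (H : Set S.M) (n : ℕ) : Set S.M :=
  interior (⋃ c ∈ {c : ℤ → Fin S.N | (S.cell n c ∩ closure H).Nonempty}, S.cell n c)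

namespace MarkovSystem

variable (S : MarkovSystem)

lemma cont_pow (g : Equiv.Perm S.M) (hg : Continuous ⇑g) :
    ∀ n : ℕ, Continuous ⇑(g ^ n) := by
  intro n
  induction n with
  | zero => simpa using continuous_id
  | succ n ih =>
    have h : ⇑(g ^ (n + 1)) = ⇑(g ^ n) ∘ ⇑g := by
      ext x; simp [pow_succ, Equiv.Perm.mul_apply]
    rw [h]; exact ih.comp hg

lemma cont_zpow (i : ℤ) : Continuous ⇑(S.f ^ i) := by
  cases i with
  | ofNat n =>
    rw [Int.ofNat_eq_coe, zpow_natCast]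
    exact S.cont_pow S.f S.f_cont n
  | negSucc n =>
    rw [zpow_negSucc, ← inv_pow]
    have h : ⇑(S.f⁻¹) = ⇑S.f.symm := by rw [Equiv.Perm.inv_def]
    exact S.cont_pow S.f⁻¹ (h ▸ S.f_symm_cont) (n + 1)

lemma isClosed_P (j : Fin S.N) : IsClosed (S.P j) := by
  rw [S.proper j]; exact isClosed_closure

lemma cell_eq (n : ℕ) (c : ℤ → Fin S.N) :
    S.cell n c = ⋂ i ∈ Finset.Icc (-(n : ℤ)) (n : ℤ), (S.f ^ i) ⁻¹' S.P (c i) := by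
  ext x; simp [cell]

lemma isClosed_cell (n : ℕ) (c : ℤ → Fin S.N) : IsClosed (S.cell n c) := by
  rw [S.cell_eq]
  exact isClosed_biInter fun i _ => (S.isClosed_P (c i)).preimage (S.cont_zpow i)

lemma cell_anti {m n : ℕ} (h : m ≤ n) (c : ℤ → Fin S.N) : S.cell n c ⊆ S.cell m c := by
  intro x hx i hi
  refine hx i ?_
  rw [Finset.mem_Icc] at hi ⊢
  omega

lemma finite_range_cell (n : ℕ) : (Set.range (S.cell n)).Finite := by
  have key : Set.range (S.cell n) ⊆ Set.range
      (fun d : (Finset.Icc (-(n : ℤ)) (n : ℤ) : Finset ℤ) → Fin S.N =>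
        {x : S.M | ∀ i : ℤ, ∀ hi : i ∈ Finset.Icc (-(n : ℤ)) (n : ℤ),
          (S.f ^ i) x ∈ S.P (d ⟨i, hi⟩)}) := by
    rintro s ⟨c, rfl⟩
    exact ⟨fun j => c j, rfl⟩
  exact (Set.finite_range _).subset key

lemma exists_coding (x : S.M) : ∃ c : ℤ → Fin S.N, ∀ i : ℤ, (S.f ^ i) x ∈ S.P (c i) := by
  have h : ∀ i : ℤ, ∃ j, (S.f ^ i) x ∈ S.P j := by
    intro i
    have : (S.f ^ i) x ∈ ⋃ j, S.P j := by rw [S.cover]; trivial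
    exact Set.mem_iUnion.mp this
  choose c hc using h
  exact ⟨c, hc⟩

lemma closure_subset_holeApprox (H : Set S.M) (n : ℕ) :
    closure H ⊆ S.holeApprox H n := by
  set K : Set S.M := ⋃ s ∈ {s ∈ Set.range (S.cell n) | s ∩ closure H = ∅}, s with hK
  have hKclosed : IsClosed K := by
    refine Set.Finite.isClosed_biUnion ((S.finite_range_cell n).subset fun s hs => hs.1) ?_
    rintro s ⟨⟨c, rfl⟩, -⟩
    exact S.isClosed_cell n c
  have hsub : Kᶜ ⊆ ⋃ c ∈ {c : ℤ → Fin S.N | (S.cell n c ∩ closure H).Nonempty}, S.cell n c := by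
    intro x hx
    obtain ⟨c, hc⟩ := S.exists_coding x
    have hxc : x ∈ S.cell n c := fun i _ => hc i
    have hne : (S.cell n c ∩ closure H).Nonempty := by
      by_contra hemp
      exact hx (Set.mem_biUnion ⟨⟨c, rfl⟩, Set.not_nonempty_iff_eq_empty.mp hemp⟩ hxc)
    exact Set.mem_biUnion hne hxc
  have hHK : closure H ⊆ Kᶜ := by
    intro x hx hxK
    obtain ⟨s, hs, hxs⟩ := Set.mem_iUnion₂.mp hxK
    exact absurd (Set.mem_inter hxs hx) (by rw [hs.2]; exact id)
  intro x hx
  have : x ∈ interior Kᶜ := by rw [hKclosed.isOpen_compl.interior_eq]; exact hHK hx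
  exact interior_mono hsub this

lemma holeApprox_anti (H : Set S.M) : Antitone (fun n : ℕ => S.holeApprox H n) := by
  intro m n hmn
  refine interior_mono ?_
  intro x hx
  obtain ⟨c, hc, hxc⟩ := Set.mem_iUnion₂.mp hx
  refine Set.mem_biUnion ?_ (S.cell_anti hmn c hxc)
  obtain ⟨y, hy⟩ := hc
  exact ⟨y, S.cell_anti hmn c hy.1, hy.2⟩

lemma survivors_anti {H₁ H₂ : Set S.M} (h : H₁ ⊆ H₂) : S.survivors H₂ ⊆ S.survivors H₁ :=
  fun p hp k hk => hp k (h hk)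

lemma exclShift_anti {H₁ H₂ : Set S.M} (h : H₁ ⊆ H₂) : S.exclShift H₂ ⊆ S.exclShift H₁ := by
  rintro c ⟨p, ⟨hps, hpω⟩, hpc⟩
  refine ⟨p, ⟨S.survivors_anti h hps, fun U hU hpU => ?_⟩, hpc⟩
  obtain ⟨n, hn, q, ⟨hqU, hqs⟩, hq⟩ := hpω U hU hpU
  exact ⟨n, hn, q, ⟨hqU, S.survivors_anti h hqs⟩, hq⟩

lemma isClosed_survivors {H : Set S.M} (hH : IsOpen H) : IsClosed (S.survivors H) := by
  have : S.survivors H = ⋂ k : ℤ, (S.f ^ k) ⁻¹' Hᶜ := by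
    ext p; simp [survivors]
  rw [this]
  exact isClosed_iInter fun k => hH.isClosed_compl.preimage (S.cont_zpow k)

lemma isClosed_exclOmega {H : Set S.M} (hH : IsOpen H) : IsClosed (S.exclOmega H) := by
  refine isClosed_of_closure_subset fun p hp => ?_
  have hps : p ∈ S.survivors H := by
    have h1 : closure (S.exclOmega H) ⊆ closure (S.survivors H) :=
      closure_mono fun q hq => hq.1
    rw [(S.isClosed_survivors hH).closure_eq] at h1
    exact h1 hp
  refine ⟨hps, fun U hU hpU => ?_⟩
  obtain ⟨q, hqU, hqΩ⟩ := mem_closure_iff.mp hp U hU hpU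
  exact hqΩ.2 U hU hqU

lemma isClosed_exclShift {H : Set S.M} (hH : IsOpen H) : IsClosed (S.exclShift H) := by
  refine isClosed_of_closure_subset fun c hc => ?_
  have key : ∀ n : ℕ, ∃ p ∈ S.exclOmega H,
      ∀ i ∈ Finset.Icc (-(n : ℤ)) (n : ℤ), (S.f ^ i) p ∈ S.P (c i) := by
    intro n
    set V : Set (ℤ → Fin S.N) := {d | ∀ i ∈ Finset.Icc (-(n : ℤ)) (n : ℤ), d i = c i} with hV
    have hVopen : IsOpen V := by
      have : V = ⋂ i ∈ Finset.Icc (-(n : ℤ)) (n : ℤ),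
          (fun d : ℤ → Fin S.N => d i) ⁻¹' {c i} := by
        ext d; simp [hV]
      rw [this]
      exact isOpen_biInter_finset fun i _ =>
        (isOpen_discrete _).preimage (continuous_apply i)
    obtain ⟨d, hdV, p, hpΩ, hpc⟩ := mem_closure_iff.mp hc V hVopen (fun i _ => rfl)
    exact ⟨p, hpΩ, fun i hi => by rw [← hdV i hi]; exact hpc i⟩
  choose p hpΩ hpc using key
  obtain ⟨q, hqΩ, φ, hφ, hconv⟩ :=
    ((S.isClosed_exclOmega hH).isCompact).tendsto_subseq hpΩ
  refine ⟨q, hqΩ, fun i => ?_⟩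
  refine (S.isClosed_P (c i)).mem_of_tendsto
    (((S.cont_zpow i).tendsto q).comp hconv) ?_
  filter_upwards [Filter.eventually_ge_atTop i.natAbs] with k hk
  refine hpc (φ k) i ?_
  have h1 : k ≤ φ k := hφ.le_apply
  rw [Finset.mem_Icc]
  omega

end MarkovSystem

/-- the Markov approximations `H⁽ⁿ⁾` of an open hole `H` with compact
boundary form a decreasing sequence of sets whose intersection is the closure of `H`;
the corresponding exclusion systems `Σ⁽ⁿ⁾` increase, and the closure of their union is
contained in the exclusion subshift `Σ_H`. -/
theorem markov_hole_approximation (S : MarkovSystem) (H : Set S.M)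
    (hHopen : IsOpen H) (hHbd : IsCompact (frontier H)) :
    Antitone (fun n : ℕ => S.holeApprox H n) ∧
    (⋂ n : ℕ, S.holeApprox H n) = closure H ∧
    Monotone (fun n : ℕ => S.exclShift (S.holeApprox H n)) ∧
    closure (⋃ n : ℕ, S.exclShift (S.holeApprox H n)) ⊆ S.exclShift H := by
  have hanti := S.holeApprox_anti H
  have hsub : ∀ n, closure H ⊆ S.holeApprox H n := S.closure_subset_holeApprox H
  have hinter : (⋂ n : ℕ, S.holeApprox H n) = closure H := by
    refine Set.Subset.antisymm ?_ (Set.subset_iInter hsub)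
    intro x hx
    by_contra hxH
    obtain ⟨δ, hδ, hball⟩ := Metric.isOpen_iff.mp isClosed_closure.isOpen_compl x hxH
    obtain ⟨n, hn⟩ := S.generating (δ / 2) (by linarith)
    have hx' : x ∈ S.holeApprox H n := Set.mem_iInter.mp hx n
    obtain ⟨c, hc, hxc⟩ := Set.mem_iUnion₂.mp (interior_subset hx')
    obtain ⟨y, hyc, hyH⟩ := hc
    have hbnd : Bornology.IsBounded (S.cell n c) :=
      (isCompact_univ.isBounded).subset (Set.subset_univ _)
    have hdist : dist x y ≤ δ / 2 :=
      le_trans (Metric.dist_le_diam_of_mem hbnd hxc hyc) (hn c)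
    have : y ∈ Metric.ball x δ := by
      rw [Metric.mem_ball, dist_comm]; linarith
    exact hball this hyH
  refine ⟨hanti, hinter, ?_, ?_⟩
  · intro m n hmn
    exact S.exclShift_anti (hanti hmn)
  · refine closure_minimal ?_ (S.isClosed_exclShift hHopen)
    refine Set.iUnion_subset fun n => ?_
    exact S.exclShift_anti (subset_closure.trans (hsub n))
end

section
/- In an interval exclusion system, every connected component (gap) G of the complement of the surviving set Ω falls into the hole coherently: all points of G first enter the enlarged hole Ĥ at the same time n and into the same component Ĥ_k. -/
/-- A preconnected set avoiding the frontier of an open set and meeting it is contained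
in it. -/
lemma preconn_subset_of_frontier_disjoint {C U : Set ℝ} (hC : IsPreconnected C)
    (hU : IsOpen U) (hdisj : ∀ x ∈ C, x ∉ frontier U) (hne : (C ∩ U).Nonempty) : C ⊆ U := by
  have hcov : C ⊆ U ∪ (closure U)ᶜ := by
    intro y hy
    by_cases hyU : y ∈ U
    · exact Or.inl hyU
    · refine Or.inr fun hyc => hdisj y hy ?_
      rw [closure_eq_self_union_frontier] at hyc
      exact hyc.resolve_left hyU
  intro x hx
  by_contra hxU
  have hx2 : x ∈ (closure U)ᶜ := (hcov hx).resolve_left hxU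
  obtain ⟨y, hyC, hyU, hyc⟩ :=
    hC U (closure U)ᶜ hU isClosed_closure.isOpen_compl hcov hne ⟨x, hx, hx2⟩
  exact hyc (subset_closure hyU)

/-- in an interval exclusion system, every gap (connected component `G`
of the complement of the surviving set `Ω`) falls into the enlarged hole `Ĥ = ⋃ Hc k`
coherently: if `z` first enters `Ĥ` at time `n` into the component `Hc k`, then every
point `w` of the same component of `Ωᶜ` does likewise.

Here `f` is a continuous (circle-)Markov map, `H = ⋃ HI a` is a finite union of open
intervals, `Ω` is the set of points whose forward orbit avoids `H`, and the `Hc k` are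
the maximal open intervals of the complement of `Ω` containing the components of `H`
(so `H ⊆ ⋃ Hc`, `⋃ Hc ⊆ Ωᶜ` and `∂(Hc k) ⊆ Ω`). -/
theorem gap_falls_coherently (f : ℝ → ℝ) (hf : Continuous f) (p r : ℕ)
    (HI : Fin p → Set ℝ)
    (hHI : ∀ a, IsOpen (HI a) ∧ (HI a).OrdConnected)
    (Hc : Fin r → Set ℝ)
    (hHc : ∀ k, IsOpen (Hc k) ∧ (Hc k).OrdConnected)
    (hHcdisj : Pairwise (Function.onFun Disjoint Hc))
    (Ω : Set ℝ) (hΩ : Ω = {x : ℝ | ∀ n : ℕ, f^[n] x ∉ ⋃ a, HI a})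
    (hsub : (⋃ a, HI a) ⊆ ⋃ k, Hc k)
    (hcompl : (⋃ k, Hc k) ⊆ Ωᶜ)
    (hfront : ∀ k, frontier (Hc k) ⊆ Ω) :
    ∀ z w : ℝ, z ∉ Ω → w ∈ connectedComponentIn Ωᶜ z →
      ∀ (n : ℕ) (k : Fin r),
        (f^[n] z ∈ Hc k ∧ ∀ m < n, f^[m] z ∉ ⋃ j, Hc j) →
        (f^[n] w ∈ Hc k ∧ ∀ m < n, f^[m] w ∉ ⋃ j, Hc j) := by
  intro z w hz hw n k ⟨hzn, hzmin⟩
  set G := connectedComponentIn Ωᶜ z with hG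
  have hzG : z ∈ G := mem_connectedComponentIn hz
  have hGΩ : G ⊆ Ωᶜ := connectedComponentIn_subset _ _
  have hGpre : IsPreconnected G := isPreconnected_connectedComponentIn
  -- key claim by strong induction
  have key : ∀ m, m ≤ n → ∀ j, ((f^[m] '' G) ∩ Hc j).Nonempty → f^[m] '' G ⊆ Hc j := by
    intro m
    induction m using Nat.strong_induction_on with
    | _ m ih =>
      intro hmn j hne
      have hpre : IsPreconnected (f^[m] '' G) :=
        hGpre.image _ (hf.iterate m).continuousOn
      refine preconn_subset_of_frontier_disjoint hpre (hHc j).1 ?_ hne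
      rintro y ⟨g, hgG, rfl⟩ hyfr
      -- f^[m] g ∈ frontier (Hc j) ⊆ Ω, so g ∈ Ω, contradiction
      have hΩmem : f^[m] g ∈ Ω := hfront j hyfr
      have hgΩ : g ∈ Ω := by
        rw [hΩ]
        intro t
        rcases le_or_gt m t with hmt | htm
        · have : f^[t] g = f^[t - m] (f^[m] g) := by
            rw [← Function.iterate_add_apply, Nat.sub_add_cancel hmt]
          rw [this]
          rw [hΩ] at hΩmem
          exact hΩmem (t - m)
        · intro hmem
          have hmemHc : f^[t] g ∈ ⋃ j', Hc j' := hsub hmem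
          obtain ⟨_, ⟨j', rfl⟩, hj'⟩ := hmemHc
          have hsubim : f^[t] '' G ⊆ Hc j' :=
            ih t htm (le_of_lt (lt_of_lt_of_le htm hmn)) j' ⟨f^[t] g, ⟨g, hgG, rfl⟩, hj'⟩
          have : f^[t] z ∈ Hc j' := hsubim ⟨z, hzG, rfl⟩
          exact hzmin t (lt_of_lt_of_le htm hmn) (Set.mem_iUnion.mpr ⟨j', this⟩)
      exact hGΩ hgG hgΩ
  -- for m < n, images of G are disjoint from every Hc j
  have avoid : ∀ m < n, ∀ x ∈ G, f^[m] x ∉ ⋃ j, Hc j := by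
    intro m hm x hxG hmem
    obtain ⟨_, ⟨j, rfl⟩, hj⟩ := hmem
    have : f^[m] '' G ⊆ Hc j :=
      key m (le_of_lt hm) j ⟨f^[m] x, ⟨x, hxG, rfl⟩, hj⟩
    exact hzmin m hm (Set.mem_iUnion.mpr ⟨j, this ⟨z, hzG, rfl⟩⟩)
  refine ⟨?_, fun m hm => avoid m hm w hw⟩
  exact key n le_rfl k ⟨f^[n] z, ⟨z, hzG, rfl⟩, hzn⟩ ⟨w, hw, rfl⟩
end
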